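/- Let ℏ₀ > 0 and define N : ℝ → ℝ by N(ℏ) := sup_{a∈ℤ} |sin(2π ℏ a / ℏ₀)|. Then N(ℏ₀) = 0, while N(ℏ₀·(1 + 1/(4k))) = 1 for every positive integer k; consequently N is not continuous at ℏ₀. (N(ℏ) is the operator norm ‖Q_ℏ^W(e₀ ⊗ h)‖ of the Weyl quantization of the phase-space function (q,p) ↦ sin(p₁/ℏ₀) on T*T^n, so Rieffel's condition — continuity of ℏ ↦ ‖Q_ℏ^W(f)‖ away from 0 — fails for Weyl quantization on the torus.) -/

import Mathlib

/-- `N(ℏ) = sup_{a∈ℤ} |sin(2πℏa/ℏ₀)|`, the operator norm of the Weyl quantization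
`Q_ℏ^W(e₀ ⊗ h)` of the phase-space function `(q,p) ↦ sin(p₁/ℏ₀)` on `T*Tⁿ`. -/
noncomputable def Nfun (h0 : ℝ) (h : ℝ) : ℝ :=
  ⨆ a : ℤ, |Real.sin (2 * Real.pi * h * a / h0)|

lemma Nfun_bdd (h0 h : ℝ) :
    BddAbove (Set.range fun a : ℤ => |Real.sin (2 * Real.pi * h * a / h0)|) := by
  refine ⟨1, ?_⟩
  rintro x ⟨a, rfl⟩
  exact Real.abs_sin_le_one _

lemma Nfun_zero (h0 : ℝ) (hh0 : h0 ≠ 0) : Nfun h0 h0 = 0 := by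
  unfold Nfun
  have : ∀ a : ℤ, |Real.sin (2 * Real.pi * h0 * a / h0)| = 0 := by
    intro a
    have : 2 * Real.pi * h0 * a / h0 = ((2 * a : ℤ) : ℝ) * Real.pi := by
      push_cast; field_simp
    rw [this, Real.sin_int_mul_pi, abs_zero]
  simp only [this, ciSup_const]

lemma Nfun_one (h0 : ℝ) (hh0 : 0 < h0) (k : ℕ) (hk : 0 < k) :
    Nfun h0 (h0 * (1 + 1 / (4 * k))) = 1 := by
  unfold Nfun
  apply le_antisymm
  · exact ciSup_le fun a => Real.abs_sin_le_one _
  · have hterm : |Real.sin (2 * Real.pi * (h0 * (1 + 1 / (4 * k))) * (k : ℤ) / h0)| = 1 := by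
      have hk' : (k : ℝ) ≠ 0 := Nat.cast_ne_zero.mpr hk.ne'
      have harg : 2 * Real.pi * (h0 * (1 + 1 / (4 * k))) * ((k : ℤ) : ℝ) / h0
          = Real.pi / 2 + (k : ℤ) * (2 * Real.pi) := by
        push_cast
        field_simp
        ring
      rw [harg, Real.sin_add_int_mul_two_pi, Real.sin_pi_div_two, abs_one]
    calc (1 : ℝ) = |Real.sin (2 * Real.pi * (h0 * (1 + 1 / (4 * k))) * (k : ℤ) / h0)| :=
          hterm.symm
      _ ≤ _ := le_ciSup (Nfun_bdd _ _) (k : ℤ)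

/-- Failure of Rieffel's condition away from 0 for Weyl quantization on the torus:
`N(ℏ₀) = 0`, while `N(ℏ₀·(1 + 1/(4k))) = 1` for every positive integer `k`; consequently
`N` is not continuous at `ℏ₀`. -/
theorem stmt17 (h0 : ℝ) (hh0 : 0 < h0) :
    Nfun h0 h0 = 0 ∧
    (∀ k : ℕ, 0 < k → Nfun h0 (h0 * (1 + 1 / (4 * k))) = 1) ∧
    ¬ ContinuousAt (Nfun h0) h0 := by
  refine ⟨Nfun_zero h0 hh0.ne', fun k hk => Nfun_one h0 hh0 k hk, ?_⟩
  intro hc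
  have hseq : Filter.Tendsto (fun n : ℕ => h0 * (1 + 1 / (4 * (n + 1 : ℕ)))) Filter.atTop
      (nhds h0) := by
    have h1 : Filter.Tendsto (fun n : ℕ => 1 / (4 * ((n : ℝ) + 1))) Filter.atTop (nhds 0) := by
      apply Filter.Tendsto.div_atTop tendsto_const_nhds
      apply Filter.Tendsto.const_mul_atTop (by norm_num : (0:ℝ) < 4)
      exact Filter.tendsto_atTop_add_const_right _ 1 tendsto_natCast_atTop_atTop
    have := ((h1.const_add 1).const_mul h0)
    simpa using this
  have h2 : Filter.Tendsto (fun n : ℕ => Nfun h0 (h0 * (1 + 1 / (4 * (n + 1 : ℕ)))))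
      Filter.atTop (nhds (Nfun h0 h0)) := (hc.tendsto.comp hseq)
  have h3 : (fun n : ℕ => Nfun h0 (h0 * (1 + 1 / (4 * (n + 1 : ℕ))))) = fun _ => 1 := by
    funext n
    exact Nfun_one h0 hh0 (n + 1) (Nat.succ_pos n)
  rw [h3, Nfun_zero h0 hh0.ne'] at h2
  have := tendsto_nhds_unique h2 tendsto_const_nhds
  norm_num at this
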